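/- If a class of languages is closed under gsm-mappings (generalized sequential machine mappings), then it is closed under the (non-iterated) m-bounded k-hairpin incompletion HI_{m,k} for all m, k ≥ 1. In particular, every trio is closed under m-bounded k-hairpin incompletion. -/

import Mathlib

open scoped Classical

namespace Hairpin

variable {V : Type}

/-- Reversed complement of a word under the involution `bar`. -/
def rc (bar : V → V) (w : List V) : List V := (w.map bar).reverse

/-- `w` admits a right hairpin decomposition `w = δγαβᾱ^R` with `|α| = k`, `|γ| ≤ m`. -/
def hasRightDecomp (bar : V → V) (m k : ℕ) (w : List V) : Prop :=
  ∃ δ γ α β : List V, w = δ ++ γ ++ α ++ β ++ rc bar α ∧ α.length = k ∧ γ.length ≤ m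

def hasLeftDecomp (bar : V → V) (m k : ℕ) (w : List V) : Prop :=
  ∃ α β γ δ : List V, w = α ++ β ++ rc bar α ++ γ ++ δ ∧ α.length = k ∧ γ.length ≤ m

/-- m-bounded right k-hairpin incompletion. -/
noncomputable def rHI (bar : V → V) (m k : ℕ) (w : List V) : Set (List V) :=
  if hasRightDecomp bar m k w then
    { v | ∃ δ γ α β : List V, w = δ ++ γ ++ α ++ β ++ rc bar α ∧ α.length = k ∧
          γ.length ≤ m ∧ v = w ++ rc bar γ }
  else {w}

/-- m-bounded left k-hairpin incompletion. -/
noncomputable def lHI (bar : V → V) (m k : ℕ) (w : List V) : Set (List V) :=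
  if hasLeftDecomp bar m k w then
    { v | ∃ α β γ δ : List V, w = α ++ β ++ rc bar α ++ γ ++ δ ∧ α.length = k ∧
          γ.length ≤ m ∧ v = rc bar γ ++ w }
  else {w}

/-- m-bounded k-hairpin incompletion. -/
noncomputable def HI (bar : V → V) (m k : ℕ) (w : List V) : Set (List V) :=
  rHI bar m k w ∪ lHI bar m k w

noncomputable def rHIn (bar : V → V) (m k : ℕ) (w : List V) : ℕ → Set (List V)
  | 0 => {w}
  | n + 1 => ⋃ v ∈ rHIn bar m k w n, rHI bar m k v

noncomputable def rHIstar (bar : V → V) (m k : ℕ) (w : List V) : Set (List V) :=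
  ⋃ n, rHIn bar m k w n

noncomputable def HIn (bar : V → V) (m k : ℕ) (w : List V) : ℕ → Set (List V)
  | 0 => {w}
  | n + 1 => ⋃ v ∈ HIn bar m k w n, HI bar m k v

noncomputable def HIstar (bar : V → V) (m k : ℕ) (w : List V) : Set (List V) :=
  ⋃ n, HIn bar m k w n

noncomputable def rHIstarL (bar : V → V) (m k : ℕ) (L : Set (List V)) : Set (List V) :=
  ⋃ w ∈ L, rHIstar bar m k w

noncomputable def HIL (bar : V → V) (m k : ℕ) (L : Set (List V)) : Set (List V) :=
  ⋃ w ∈ L, HI bar m k w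

noncomputable def HIstarL (bar : V → V) (m k : ℕ) (L : Set (List V)) : Set (List V) :=
  ⋃ w ∈ L, HIstar bar m k w

/-- The set `C_{m,k}(w)`. -/
def Cmk (bar : V → V) (m k : ℕ) (w : List V) : Set (List V × List V) :=
  { p | ∃ x y w₁ w₂ z : List V,
      x.length ≤ m ∧ y.length = k ∧ w = w₁ ++ (x ++ y) ++ w₂ ∧
      z.length ≤ k ∧ z <:+ w₂ ∧ z <+: rc bar y ∧ p = (x ++ y, z) }

/-- The suffix component of `D_{m,k}(w)`: all suffixes of `w` of length `i+k-1`, `0 ≤ i ≤ m`. -/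
def DmkSuf (m k : ℕ) (w : List V) : Set (List V) :=
  { s | ∃ i ≤ m, s.length = i + k - 1 ∧ s <:+ w }

noncomputable def Dmk (bar : V → V) (m k : ℕ) (w : List V) :
    Set (List V × List V) × Set (List V) :=
  (Cmk bar m k w, DmkSuf m k w)

/-- The set `C'_{m,k}(w)`. -/
def Cmk' (bar : V → V) (m k : ℕ) (w : List V) : Set (List V × List V) :=
  { p | ∃ x y w₁ w₂ z : List V,
      x.length ≤ m ∧ y.length = k ∧ w = w₁ ++ (y ++ x) ++ w₂ ∧
      z.length ≤ k ∧ z <+: w₁ ∧ z <:+ rc bar y ∧ p = (z, y ++ x) }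

/-- The prefix component of `D'_{m,k}(w)`. -/
def DmkPref (m k : ℕ) (w : List V) : Set (List V) :=
  { s | ∃ i ≤ m, s.length = i + k - 1 ∧ s <+: w }

noncomputable def Dmk' (bar : V → V) (m k : ℕ) (w : List V) :
    Set (List V × List V) × Set (List V) :=
  (Cmk' bar m k w, DmkPref m k w)

noncomputable def Emk (bar : V → V) (m k : ℕ) (w : List V) :=
  (Dmk bar m k w, Dmk' bar m k w)


/-- View a set of words as a `Language`. -/
def lang {V : Type} (L : Set (List V)) : Language V := L


/-- A (nondeterministic) generalized sequential machine from alphabet `α` to alphabet `β`. -/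
structure GSM (α β : Type) where
  Q : Type
  [fin : Fintype Q]
  start : Q
  accept : Set Q
  step : Q → α → Set (Q × List β)

/-- `M.Run q u v q'` : reading input `u` from state `q`, the gsm `M` can output `v`,
ending in state `q'`. -/
inductive GSM.Run {α β : Type} (M : GSM α β) : M.Q → List α → List β → M.Q → Prop
  | nil (q : M.Q) : GSM.Run M q [] [] q
  | cons {q q' qf : M.Q} {a : α} {u : List α} {out v : List β} :
      (q', out) ∈ M.step q a → GSM.Run M q' u v qf → GSM.Run M q (a :: u) (out ++ v) qf

/-- The gsm mapping of a language. -/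
def GSM.map {α β : Type} (M : GSM α β) (L : Set (List α)) : Set (List β) :=
  { v | ∃ u ∈ L, ∃ qf ∈ M.accept, M.Run M.start u v qf }

variable {V : Type} [Fintype V]

/-! ### Auxiliary machinery for `gsm_closed_HIL` -/

@[simp] lemma rc_nil (bar : V → V) : rc bar [] = [] := rfl

@[simp] lemma rc_length (bar : V → V) (l : List V) : (rc bar l).length = l.length := by
  simp [rc]

/-- States of the gsm realizing hairpin incompletion. -/
inductive QS (V : Type) : Type where
  | st | s0
  | rG (g : List V)
  | rA (g a : List V)
  | rB (g a : List V)
  | rS (g s : List V)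
  | lA (g a : List V)
  | lB (g q : List V)
  | lS (r : List V)
  | lD | qf

def mkRA (k : ℕ) (g a : List V) : QS V :=
  if a.length = k then .rB g a else .rA g a

noncomputable def mkA (bar : V → V) (k : ℕ) (g a : List V) : QS V :=
  if a.length = k then .lB g (rc bar a) else .lA g a

def stepS0 (m k : ℕ) (x : V) : Set (QS V × List V) :=
  {p | p = (.s0, [x]) ∨ (1 ≤ m ∧ p = (.rG [x], [x])) ∨ (1 ≤ k ∧ p = (mkRA k [] [x], [x]))}

def matchR (bar : V → V) (g s : List V) (x : V) : Set (QS V × List V) :=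
  {p | (s = [x] ∧ p = (.qf, x :: rc bar g)) ∨
       (∃ s', s' ≠ [] ∧ s = x :: s' ∧ p = (.rS g s', [x]))}

def matchL (g q : List V) (x : V) : Set (QS V × List V) :=
  {p | (q = [x] ∧ g = [] ∧ p = (.lD, [x])) ∨
       (∃ s, q = x :: s ∧ s ++ g ≠ [] ∧ p = (.lS (s ++ g), [x]))}

noncomputable def rawStep (bar : V → V) (m k : ℕ) : QS V → V → Set (QS V × List V)
  | .st, x => stepS0 m k x ∪
      {p | ∃ g : List V, g.length ≤ m ∧ 1 ≤ k ∧ p = (mkA bar k g [x], rc bar g ++ [x])}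
  | .s0, x => stepS0 m k x
  | .rG g, x => {p | (g.length + 1 ≤ m ∧ p = (.rG (g ++ [x]), [x])) ∨
      (1 ≤ k ∧ p = (mkRA k g [x], [x]))}
  | .rA g a, x => {p | p = (mkRA k g (a ++ [x]), [x])}
  | .rB g a, x => {p | p = (.rB g a, [x])} ∪ matchR bar g (rc bar a) x
  | .rS g s, x => matchR bar g s x
  | .lA g a, x => {p | p = (mkA bar k g (a ++ [x]), [x])}
  | .lB g q, x => {p | p = (.lB g q, [x])} ∪ matchL g q x
  | .lS r, x => matchL [] r x
  | .lD, x => {p | p = (.lD, [x])}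
  | .qf, _ => ∅

def okQ (m k : ℕ) : QS V → Prop
  | .st => True
  | .s0 => True
  | .rG g => g.length ≤ m
  | .rA g a => g.length ≤ m ∧ a.length ≤ k
  | .rB g a => g.length ≤ m ∧ a.length ≤ k
  | .rS g s => g.length ≤ m ∧ s.length ≤ k
  | .lA g a => g.length ≤ m ∧ a.length ≤ k
  | .lB g q => g.length ≤ m ∧ q.length ≤ k
  | .lS r => r.length ≤ m + k
  | .lD => True
  | .qf => True

def rightExt (bar : V → V) (m k : ℕ) (w v : List V) : Prop :=
  ∃ δ γ α β : List V, w = δ ++ γ ++ α ++ β ++ rc bar α ∧ α.length = k ∧ γ.length ≤ m ∧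
    v = w ++ rc bar γ

def leftExt (bar : V → V) (m k : ℕ) (w v : List V) : Prop :=
  ∃ α β γ δ : List V, w = α ++ β ++ rc bar α ++ γ ++ δ ∧ α.length = k ∧ γ.length ≤ m ∧
    v = rc bar γ ++ w

def Spec (bar : V → V) (m k : ℕ) : QS V → List V → List V → Prop
  | .st, u, v => v = u ∨ rightExt bar m k u v ∨ leftExt bar m k u v
  | .s0, u, v => v = u ∨ rightExt bar m k u v
  | .rG g, u, v => g ≠ [] → g.length ≤ m →
      ∃ γ₂ α β : List V, u = γ₂ ++ α ++ β ++ rc bar α ∧ (g ++ γ₂).length ≤ m ∧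
        α.length = k ∧ v = u ++ rc bar (g ++ γ₂)
  | .rA g a, u, v => a ≠ [] → a.length < k → g.length ≤ m →
      ∃ α₂ β : List V, u = α₂ ++ β ++ rc bar (a ++ α₂) ∧ (a ++ α₂).length = k ∧
        v = u ++ rc bar g
  | .rB g a, u, v => a.length = k → g.length ≤ m →
      ∃ β : List V, u = β ++ rc bar a ∧ v = u ++ rc bar g
  | .rS g s, u, v => s ≠ [] → g.length ≤ m → u = s ∧ v = s ++ rc bar g
  | .lA g a, u, v => a ≠ [] → a.length < k → g.length ≤ m →
      ∃ α₂ β δ : List V, u = α₂ ++ β ++ rc bar (a ++ α₂) ++ g ++ δ ∧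
        (a ++ α₂).length = k ∧ v = u
  | .lB g q, u, v => q.length = k → g.length ≤ m →
      ∃ β δ : List V, u = β ++ q ++ g ++ δ ∧ v = u
  | .lS r, u, v => r ≠ [] → ∃ δ : List V, u = r ++ δ ∧ v = u
  | .lD, u, v => v = u
  | .qf, u, v => u = [] ∧ v = []
lemma pair_eq {A B : Type} {a c : A} {b d : B} (h : (a, b) = (c, d)) : a = c ∧ b = d := by
  injection h with h1 h2; exact ⟨h1, h2⟩

lemma stepS0_sound {bar : V → V} {m k : ℕ} {x : V} {q' : QS V} {out u v : List V}
    (h : (q', out) ∈ stepS0 (V := V) m k x) (hp : Spec bar m k q' u v) :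
    Spec bar m k .s0 (x :: u) (out ++ v) := by
  simp only [stepS0, Set.mem_setOf_eq] at h
  rcases h with he | ⟨hm1, he⟩ | ⟨hk1, he⟩
  · obtain ⟨rfl, rfl⟩ := pair_eq he
    rcases hp with rfl | ⟨δ, γ, α, β, hu, hα, hγ, hv⟩
    · exact Or.inl rfl
    · exact Or.inr ⟨x :: δ, γ, α, β, by simp [hu], hα, hγ, by simp [hv]⟩
  · obtain ⟨rfl, rfl⟩ := pair_eq he
    obtain ⟨γ₂, α, β, hu, hlen, hα, hv⟩ := hp (by simp) (by simpa using hm1)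
    refine Or.inr ⟨[], x :: γ₂, α, β, by simp [hu], hα, ?_, by simp [hv]⟩
    simp at hlen ⊢; omega
  · obtain ⟨rfl, rfl⟩ := pair_eq he
    by_cases hlen : ([x] : List V).length = k
    · rw [mkRA, if_pos hlen] at hp
      obtain ⟨β, hu, hv⟩ := hp hlen (by simp)
      exact Or.inr ⟨[], [], [x], β, by simp [hu], hlen, by simp, by simp [hv]⟩
    · rw [mkRA, if_neg hlen] at hp
      obtain ⟨α₂, β, hu, hαk, hv⟩ := hp (by simp) (by simp at hlen ⊢; omega) (by simp)
      refine Or.inr ⟨[], [], x :: α₂, β, by simp [hu], ?_, by simp, by simp [hv]⟩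
      simp at hαk ⊢; omega

lemma step_sound {bar : V → V} {m k : ℕ} {x : V} {q q' : QS V} {out u v : List V}
    (h : (q', out) ∈ rawStep bar m k q x) (hp : Spec bar m k q' u v) :
    Spec bar m k q (x :: u) (out ++ v) := by
  cases q with
  | st =>
      simp only [rawStep, Set.mem_union, Set.mem_setOf_eq] at h
      rcases h with h | ⟨g, hg, hk1, he⟩
      · rcases stepS0_sound h hp with h' | h'
        · exact Or.inl h'
        · exact Or.inr (Or.inl h')
      · obtain ⟨rfl, rfl⟩ := pair_eq he
        by_cases hlen : ([x] : List V).length = k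
        · rw [mkA, if_pos hlen] at hp
          obtain ⟨β, δ, hu, hv⟩ := hp (by simpa using hlen) hg
          exact Or.inr (Or.inr ⟨[x], β, g, δ, by simp [hu], hlen, hg, by simp [hv]⟩)
        · rw [mkA, if_neg hlen] at hp
          obtain ⟨α₂, β, δ, hu, hαk, hv⟩ := hp (by simp) (by simp at hlen ⊢; omega) hg
          refine Or.inr (Or.inr ⟨x :: α₂, β, g, δ, by simp [hu], ?_, hg, by simp [hv]⟩)
          simp at hαk ⊢; omega
  | s0 =>
      simp only [rawStep] at h
      exact stepS0_sound h hp
  | rG g =>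
      intro hne hgm
      simp only [rawStep, Set.mem_setOf_eq] at h
      rcases h with ⟨hg1, he⟩ | ⟨hk1, he⟩
      · obtain ⟨rfl, rfl⟩ := pair_eq he
        obtain ⟨γ₂, α, β, hu, hlen, hα, hv⟩ := hp (by simp) (by simpa using hg1)
        refine ⟨x :: γ₂, α, β, by simp [hu], ?_, hα, ?_⟩
        · simp at hlen ⊢; omega
        · simp [List.append_assoc] at hv ⊢; simpa using hv
      · obtain ⟨rfl, rfl⟩ := pair_eq he
        by_cases hlen : ([x] : List V).length = k
        · rw [mkRA, if_pos hlen] at hp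
          obtain ⟨β, hu, hv⟩ := hp hlen hgm
          exact ⟨[], [x], β, by simp [hu], by simpa using hgm, hlen, by simp [hv]⟩
        · rw [mkRA, if_neg hlen] at hp
          obtain ⟨α₂, β, hu, hαk, hv⟩ := hp (by simp) (by simp at hlen ⊢; omega) hgm
          refine ⟨[], x :: α₂, β, by simp [hu], by simpa using hgm, ?_, by simp [hv]⟩
          simp at hαk ⊢; omega
  | rA g a =>
      intro hne hlt hγ
      simp only [rawStep, Set.mem_setOf_eq] at h
      obtain ⟨rfl, rfl⟩ := pair_eq h
      by_cases hl : (a ++ [x]).length = k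
      · rw [mkRA, if_pos hl] at hp
        obtain ⟨β, hu, hv⟩ := hp hl hγ
        exact ⟨[x], β, by simp [hu], by simpa using hl, by simp [hv]⟩
      · rw [mkRA, if_neg hl] at hp
        obtain ⟨α₂, β, hu, hαk, hv⟩ := hp (by simp) (by simp at hl ⊢; omega) hγ
        refine ⟨x :: α₂, β, ?_, ?_, by simp [hv]⟩
        · simp [List.append_assoc] at hu ⊢; simpa using hu
        · simp at hαk ⊢; omega
  | rB g a =>
      intro hak hγ
      simp only [rawStep, matchR, Set.mem_union, Set.mem_setOf_eq] at h
      rcases h with he | ⟨hs, he⟩ | ⟨s', hs', hs, he⟩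
      · obtain ⟨rfl, rfl⟩ := pair_eq he
        obtain ⟨β, hu, hv⟩ := hp hak hγ
        exact ⟨x :: β, by simp [hu], by simp [hv]⟩
      · obtain ⟨rfl, rfl⟩ := pair_eq he
        obtain ⟨rfl, rfl⟩ := hp
        exact ⟨[], by simp [hs], by simp⟩
      · obtain ⟨rfl, rfl⟩ := pair_eq he
        obtain ⟨rfl, hv⟩ := hp hs' hγ
        exact ⟨[], by simp [hs], by simp [hv]⟩
  | rS g s =>
      intro hne hγ
      simp only [rawStep, matchR, Set.mem_setOf_eq] at h
      rcases h with ⟨hs, he⟩ | ⟨s', hs', hs, he⟩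
      · obtain ⟨rfl, rfl⟩ := pair_eq he
        obtain ⟨rfl, rfl⟩ := hp
        exact ⟨by simp [hs], by simp [hs]⟩
      · obtain ⟨rfl, rfl⟩ := pair_eq he
        obtain ⟨rfl, hv⟩ := hp hs' hγ
        exact ⟨by simp [hs], by simp [hs, hv]⟩
  | lA g a =>
      intro hne hlt hγ
      simp only [rawStep, Set.mem_setOf_eq] at h
      obtain ⟨rfl, rfl⟩ := pair_eq h
      by_cases hl : (a ++ [x]).length = k
      · rw [mkA, if_pos hl] at hp
        obtain ⟨β, δ, hu, hv⟩ := hp (by simpa using hl) hγ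
        exact ⟨[x], β, δ, by simp [hu], by simpa using hl, by simp [hv]⟩
      · rw [mkA, if_neg hl] at hp
        obtain ⟨α₂, β, δ, hu, hαk, hv⟩ := hp (by simp) (by simp at hl ⊢; omega) hγ
        refine ⟨x :: α₂, β, δ, ?_, ?_, by simp [hv]⟩
        · simp [List.append_assoc] at hu ⊢; simpa using hu
        · simp at hαk ⊢; omega
  | lB g q0 =>
      intro hqk hγ
      simp only [rawStep, matchL, Set.mem_union, Set.mem_setOf_eq] at h
      rcases h with he | ⟨hq, hg, he⟩ | ⟨s, hq, hsg, he⟩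
      · obtain ⟨rfl, rfl⟩ := pair_eq he
        obtain ⟨β, δ, hu, hv⟩ := hp hqk hγ
        exact ⟨x :: β, δ, by simp [hu], by simp [hv]⟩
      · obtain ⟨rfl, rfl⟩ := pair_eq he
        have hv : v = u := hp
        exact ⟨[], u, by simp [hq, hg], by simp [hv]⟩
      · obtain ⟨rfl, rfl⟩ := pair_eq he
        obtain ⟨δ, hu, hv⟩ := hp hsg
        exact ⟨[], δ, by simp [hq, hu], by simp [hv]⟩
  | lS r =>
      intro hne
      simp only [rawStep, matchL, Set.mem_setOf_eq] at h
      rcases h with ⟨hr, hg, he⟩ | ⟨s, hr, hsg, he⟩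
      · obtain ⟨rfl, rfl⟩ := pair_eq he
        have hv : v = u := hp
        exact ⟨u, by simp [hr], by simp [hv]⟩
      · obtain ⟨rfl, rfl⟩ := pair_eq he
        obtain ⟨δ, hu, hv⟩ := hp hsg
        exact ⟨δ, by simp [hr, hu], by simp [hv]⟩
  | lD =>
      simp only [rawStep, Set.mem_setOf_eq] at h
      obtain ⟨rfl, rfl⟩ := pair_eq h
      have hv : v = u := hp
      show ([x] : List V) ++ v = x :: u
      simp [hv]
  | qf => exact h.elim
def encQ : QS V → ℕ × List V × List V
  | .st => (0, [], [])
  | .s0 => (1, [], [])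
  | .rG g => (2, g, [])
  | .rA g a => (3, g, a)
  | .rB g a => (4, g, a)
  | .rS g s => (5, g, s)
  | .lA g a => (6, g, a)
  | .lB g q => (7, g, q)
  | .lS r => (8, r, [])
  | .lD => (9, [], [])
  | .qf => (10, [], [])

lemma encQ_inj : Function.Injective (encQ (V := V)) := by
  intro q1 q2 h
  cases q1 <;> cases q2 <;> simp_all [encQ]

lemma encQ_lt (q : QS V) : (encQ q).1 < 11 := by cases q <;> simp [encQ]

lemma encQ_bound {m k : ℕ} {q : QS V} (h : okQ m k q) :
    (encQ q).2.1.length ≤ m + k ∧ (encQ q).2.2.length ≤ m + k := by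
  cases q <;> simp [encQ, okQ] at h ⊢ <;> omega

lemma list_ext_of_bounded {N : ℕ} {l1 l2 : List V} (h1 : l1.length ≤ N) (h2 : l2.length ≤ N)
    (h : ∀ i : Fin N, l1[i.1]? = l2[i.1]?) : l1 = l2 := by
  apply List.ext_getElem?
  intro n
  by_cases hn : n < N
  · exact h ⟨n, hn⟩
  · rw [List.getElem?_eq_none_iff.2 (by omega), List.getElem?_eq_none_iff.2 (by omega)]

lemma finQ [Fintype V] (m k : ℕ) : Finite {q : QS V // okQ m k q} := by
  classical
  apply Finite.of_injective
    (fun q : {q : QS V // okQ m k q} =>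
      ((⟨(encQ q.1).1 % 11, Nat.mod_lt _ (by norm_num)⟩ : Fin 11),
        (fun i : Fin (m + k) => (encQ q.1).2.1[i.1]?),
        (fun i : Fin (m + k) => (encQ q.1).2.2[i.1]?)))
  intro q1 q2 h
  have h1 := congrArg Prod.fst h
  have h2 := congrArg (fun p => p.2.1) h
  have h3 := congrArg (fun p => p.2.2) h
  simp only at h1 h2 h3
  apply Subtype.ext
  apply encQ_inj
  have ht : (encQ q1.1).1 = (encQ q2.1).1 := by
    have h1' := congrArg Fin.val h1
    simp only at h1'
    rwa [Nat.mod_eq_of_lt (encQ_lt _), Nat.mod_eq_of_lt (encQ_lt _)] at h1'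
  have hb1 := encQ_bound q1.2
  have hb2 := encQ_bound q2.2
  have hl1 : (encQ q1.1).2.1 = (encQ q2.1).2.1 :=
    list_ext_of_bounded hb1.1 hb2.1 fun i => congrFun h2 i
  have hl2 : (encQ q1.1).2.2 = (encQ q2.1).2.2 :=
    list_ext_of_bounded hb1.2 hb2.2 fun i => congrFun h3 i
  exact Prod.ext ht (Prod.ext hl1 hl2)

/-- The gsm realizing (non-iterated) hairpin incompletion. -/
noncomputable def MGSM [Fintype V] (bar : V → V) (m k : ℕ) : GSM V V where
  Q := {q : QS V // okQ m k q}
  fin := @Fintype.ofFinite _ (finQ m k)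
  start := ⟨.st, trivial⟩
  accept := {q | q.1 = .st ∨ q.1 = .s0 ∨ q.1 = .lD ∨ q.1 = .qf}
  step := fun q x => {p | (p.1.1, p.2) ∈ rawStep bar m k q.1 x}
lemma run_cast {α β : Type} {M : GSM α β} {q q' p p' : M.Q} {u v u' v' : List _}
    (h : M.Run q u v q') (hq : p = q) (hu : u' = u) (hv : v' = v) (hq' : p' = q') :
    M.Run p u' v' p' := by subst hq hu hv hq'; exact h

lemma run_append {α β : Type} {M : GSM α β} {q q' q'' : M.Q} {u1 v1 u2 v2 : List _}
    (h1 : M.Run q u1 v1 q') (h2 : M.Run q' u2 v2 q'') :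
    M.Run q (u1 ++ u2) (v1 ++ v2) q'' := by
  induction h1 with
  | nil => simpa using h2
  | cons hs _ ih =>
      refine run_cast (GSM.Run.cons hs (ih h2)) rfl (by simp) (by simp) rfl

lemma run_single {α β : Type} {M : GSM α β} {q q' : M.Q} {a : α} {out : List β}
    (hs : (q', out) ∈ M.step q a) : M.Run q [a] out q' := by
  have := GSM.Run.cons hs (GSM.Run.nil q')
  simpa using this

lemma run_sound [Fintype V] {bar : V → V} {m k : ℕ} {q fq : (MGSM bar m k).Q} {u v : List V}
    (h : (MGSM bar m k).Run q u v fq) (hacc : fq ∈ (MGSM bar m k).accept) :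
    Spec bar m k q.1 u v := by
  induction h with
  | nil q =>
      rcases hacc with h | h | h | h <;> rw [h]
      · exact Or.inl rfl
      · exact Or.inl rfl
      · exact rfl
      · exact ⟨rfl, rfl⟩
  | cons hs hr ih => exact step_sound hs (ih hacc)

lemma self_mem_rHI (bar : V → V) (m k : ℕ) (w : List V) : w ∈ rHI bar m k w := by
  rw [rHI]
  split
  · rename_i hd
    obtain ⟨δ, γ, α, β, he, hα, hγ⟩ := hd
    exact ⟨δ ++ γ, [], α, β, by simp [he], hα, by simp, by simp⟩
  · rfl

lemma Spec_st_HI {bar : V → V} {m k : ℕ} {w v : List V} (hp : Spec bar m k .st w v) :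
    v ∈ HI bar m k w := by
  rcases hp with heq | hr | hl
  · rw [heq]; exact Or.inl (self_mem_rHI bar m k w)
  · left
    rw [rHI, if_pos]
    · exact hr
    · obtain ⟨δ, γ, α, β, he, hα, hγ, _⟩ := hr
      exact ⟨δ, γ, α, β, he, hα, hγ⟩
  · right
    rw [lHI, if_pos]
    · exact hl
    · obtain ⟨α, β, γ, δ, he, hα, hγ, _⟩ := hl
      exact ⟨α, β, γ, δ, he, hα, hγ⟩
lemma ok_mkRA {m k : ℕ} {g a : List V} (hg : g.length ≤ m) (ha : a.length ≤ k) :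
    okQ m k (mkRA k g a) := by
  unfold mkRA; split
  · exact ⟨hg, ha⟩
  · exact ⟨hg, ha⟩

lemma ok_mkA {bar : V → V} {m k : ℕ} {g a : List V} (hg : g.length ≤ m) (ha : a.length ≤ k) :
    okQ m k (mkA bar k g a) := by
  unfold mkA; split
  · exact ⟨hg, by simpa using ha⟩
  · exact ⟨hg, ha⟩

section Runs

variable {V : Type} [Fintype V] {bar : V → V} {m k : ℕ}

lemma run_copy_s0 (bar : V → V) (m k : ℕ) (u : List V) :
    (MGSM bar m k).Run ⟨.s0, trivial⟩ u u ⟨.s0, trivial⟩ := by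
  induction u with
  | nil => exact GSM.Run.nil _
  | cons a u ih =>
      have step1 : ((⟨.s0, trivial⟩ : (MGSM bar m k).Q), [a]) ∈
          (MGSM bar m k).step ⟨.s0, trivial⟩ a := Or.inl rfl
      exact run_cast (GSM.Run.cons step1 ih) rfl rfl (by simp) rfl

lemma run_copyD (bar : V → V) (m k : ℕ) (u : List V) :
    (MGSM bar m k).Run ⟨.lD, trivial⟩ u u ⟨.lD, trivial⟩ := by
  induction u with
  | nil => exact GSM.Run.nil _
  | cons a u ih =>
      have step1 : ((⟨.lD, trivial⟩ : (MGSM bar m k).Q), [a]) ∈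
          (MGSM bar m k).step ⟨.lD, trivial⟩ a := rfl
      exact run_cast (GSM.Run.cons step1 ih) rfl rfl (by simp) rfl

lemma run_copy_rB (bar : V → V) (m k : ℕ) (g a : List V) (o : okQ m k (.rB g a)) (u : List V) :
    (MGSM bar m k).Run ⟨.rB g a, o⟩ u u ⟨.rB g a, o⟩ := by
  induction u with
  | nil => exact GSM.Run.nil _
  | cons x u ih =>
      have step1 : ((⟨.rB g a, o⟩ : (MGSM bar m k).Q), [x]) ∈
          (MGSM bar m k).step ⟨.rB g a, o⟩ x := Or.inl rfl
      exact run_cast (GSM.Run.cons step1 ih) rfl rfl (by simp) rfl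

lemma run_copy_lB (bar : V → V) (m k : ℕ) (g q0 : List V) (o : okQ m k (.lB g q0)) (u : List V) :
    (MGSM bar m k).Run ⟨.lB g q0, o⟩ u u ⟨.lB g q0, o⟩ := by
  induction u with
  | nil => exact GSM.Run.nil _
  | cons x u ih =>
      have step1 : ((⟨.lB g q0, o⟩ : (MGSM bar m k).Q), [x]) ∈
          (MGSM bar m k).step ⟨.lB g q0, o⟩ x := Or.inl rfl
      exact run_cast (GSM.Run.cons step1 ih) rfl rfl (by simp) rfl

lemma run_gam (bar : V → V) (m k : ℕ) :
    ∀ (γ₂ γ₁ : List V), (γ₁ ++ γ₂).length ≤ m → ∀ (o1 : okQ m k (QS.rG γ₁))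
      (o2 : okQ m k (QS.rG (γ₁ ++ γ₂))),
    (MGSM bar m k).Run ⟨.rG γ₁, o1⟩ γ₂ γ₂ ⟨.rG (γ₁ ++ γ₂), o2⟩ := by
  intro γ₂
  induction γ₂ with
  | nil =>
      intro γ₁ h2 o1 o2
      exact run_cast (GSM.Run.nil _) rfl rfl rfl (Subtype.ext (by simp))
  | cons a rest ih =>
      intro γ₁ h2 o1 o2
      have hg : γ₁.length + 1 ≤ m := by simp at h2; omega
      have h2' : ((γ₁ ++ [a]) ++ rest).length ≤ m := by simp at h2 ⊢; omega
      have step1 : ((⟨.rG (γ₁ ++ [a]), by simpa [okQ] using hg⟩ : (MGSM bar m k).Q), [a]) ∈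
          (MGSM bar m k).step ⟨.rG γ₁, o1⟩ a := Or.inl ⟨hg, rfl⟩
      refine run_cast
        (GSM.Run.cons step1 (ih (γ₁ ++ [a]) h2' (by simpa [okQ] using hg) (by simpa [okQ] using h2')))
        rfl rfl (by simp) (Subtype.ext (by simp))

lemma run_alp (bar : V → V) (m k : ℕ) :
    ∀ (α₂ α₁ g : List V), (α₁ ++ α₂).length = k → g.length ≤ m →
      ∀ (o1 : okQ m k (mkRA k g α₁)) (o2 : okQ m k (QS.rB g (α₁ ++ α₂))),
    (MGSM bar m k).Run ⟨mkRA k g α₁, o1⟩ α₂ α₂ ⟨.rB g (α₁ ++ α₂), o2⟩ := by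
  intro α₂
  induction α₂ with
  | nil =>
      intro α₁ g h2 hg o1 o2
      have hmk : mkRA k g α₁ = QS.rB g α₁ := by rw [mkRA, if_pos (by simpa using h2)]
      exact run_cast (GSM.Run.nil _) rfl rfl rfl (Subtype.ext (by simp [hmk]))
  | cons a rest ih =>
      intro α₁ g h2 hg o1 o2
      have hlt : α₁.length ≠ k := by simp at h2; omega
      have hmk : mkRA k g α₁ = QS.rA g α₁ := by rw [mkRA, if_neg hlt]
      have hlen : (α₁ ++ [a]).length ≤ k := by simp at h2 ⊢; omega
      have step1 : ((⟨mkRA k g (α₁ ++ [a]), ok_mkRA hg hlen⟩ : (MGSM bar m k).Q), [a]) ∈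
          (MGSM bar m k).step ⟨mkRA k g α₁, o1⟩ a := by
        show (mkRA k g (α₁ ++ [a]), [a]) ∈ rawStep bar m k (mkRA k g α₁) a
        rw [hmk]
        exact rfl
      refine run_cast
        (GSM.Run.cons step1 (ih (α₁ ++ [a]) g (by simp at h2 ⊢; omega) hg (ok_mkRA hg hlen)
          ⟨hg, by simp at h2 ⊢; omega⟩))
        rfl rfl (by simp) (Subtype.ext (by simp))

lemma run_matchS (bar : V → V) (m k : ℕ) :
    ∀ (s g : List V), s ≠ [] → ∀ (o1 : okQ m k (.rS g s)),
    (MGSM bar m k).Run ⟨.rS g s, o1⟩ s (s ++ rc bar g) ⟨.qf, trivial⟩ := by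
  intro s
  induction s with
  | nil => intro g hne o1; exact absurd rfl hne
  | cons a s' ih =>
      intro g hne o1
      obtain ⟨og, os⟩ := o1
      by_cases hs : s' = []
      · subst hs
        have step1 : ((⟨.qf, trivial⟩ : (MGSM bar m k).Q), a :: rc bar g) ∈
            (MGSM bar m k).step ⟨.rS g [a], ⟨og, os⟩⟩ a := Or.inl ⟨rfl, rfl⟩
        exact run_cast (run_single step1) rfl rfl (by simp) rfl
      · have step1 : ((⟨.rS g s', ⟨og, by simp at os ⊢; omega⟩⟩ : (MGSM bar m k).Q), [a]) ∈
            (MGSM bar m k).step ⟨.rS g (a :: s'), ⟨og, os⟩⟩ a := Or.inr ⟨s', hs, rfl, rfl⟩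
        refine run_cast (GSM.Run.cons step1 (ih g hs ⟨og, by simp at os ⊢; omega⟩))
          rfl rfl (by simp) rfl

lemma run_rB_match (bar : V → V) (m k : ℕ) (g a : List V) (hα : a.length = k) (hk : 1 ≤ k)
    (o1 : okQ m k (.rB g a)) :
    (MGSM bar m k).Run ⟨.rB g a, o1⟩ (rc bar a) (rc bar a ++ rc bar g) ⟨.qf, trivial⟩ := by
  obtain ⟨og, oa⟩ := o1
  cases hrc : rc bar a with
  | nil =>
      exfalso
      have := congrArg List.length hrc
      simp [hα] at this
      omega
  | cons x s =>
      by_cases hs : s = []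
      · subst hs
        have step1 : ((⟨.qf, trivial⟩ : (MGSM bar m k).Q), x :: rc bar g) ∈
            (MGSM bar m k).step ⟨.rB g a, ⟨og, oa⟩⟩ x := Or.inr (Or.inl ⟨hrc, rfl⟩)
        exact run_cast (run_single step1) rfl rfl (by simp) rfl
      · have hsl : s.length ≤ k := by
          have := congrArg List.length hrc
          simp [hα] at this
          omega
        have step1 : ((⟨.rS g s, ⟨og, hsl⟩⟩ : (MGSM bar m k).Q), [x]) ∈
            (MGSM bar m k).step ⟨.rB g a, ⟨og, oa⟩⟩ x := Or.inr (Or.inr ⟨s, hs, hrc, rfl⟩)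
        refine run_cast (GSM.Run.cons step1 (run_matchS bar m k s g hs ⟨og, hsl⟩))
          rfl rfl (by simp) rfl

lemma run_alpL (bar : V → V) (m k : ℕ) :
    ∀ (α₂ α₁ g : List V), (α₁ ++ α₂).length = k → g.length ≤ m →
      ∀ (o1 : okQ m k (mkA bar k g α₁)) (o2 : okQ m k (QS.lB g (rc bar (α₁ ++ α₂)))),
    (MGSM bar m k).Run ⟨mkA bar k g α₁, o1⟩ α₂ α₂ ⟨.lB g (rc bar (α₁ ++ α₂)), o2⟩ := by
  intro α₂
  induction α₂ with
  | nil =>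
      intro α₁ g h2 hg o1 o2
      have hmk : mkA bar k g α₁ = QS.lB g (rc bar α₁) := by
        rw [mkA, if_pos (by simpa using h2)]
      exact run_cast (GSM.Run.nil _) rfl rfl rfl (Subtype.ext (by simp [hmk]))
  | cons a rest ih =>
      intro α₁ g h2 hg o1 o2
      have hlt : α₁.length ≠ k := by simp at h2; omega
      have hmk : mkA bar k g α₁ = QS.lA g α₁ := by rw [mkA, if_neg hlt]
      have hlen : (α₁ ++ [a]).length ≤ k := by simp at h2 ⊢; omega
      have step1 : ((⟨mkA bar k g (α₁ ++ [a]), ok_mkA hg hlen⟩ : (MGSM bar m k).Q), [a]) ∈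
          (MGSM bar m k).step ⟨mkA bar k g α₁, o1⟩ a := by
        show (mkA bar k g (α₁ ++ [a]), [a]) ∈ rawStep bar m k (mkA bar k g α₁) a
        rw [hmk]
        exact rfl
      refine run_cast
        (GSM.Run.cons step1 (ih (α₁ ++ [a]) g (by simp at h2 ⊢; omega) hg (ok_mkA hg hlen)
          ⟨hg, by simp at h2 ⊢; omega⟩))
        rfl rfl (by simp) (Subtype.ext (by simp))

lemma run_matchLS (bar : V → V) (m k : ℕ) :
    ∀ (r : List V), r ≠ [] → ∀ (o1 : okQ m k (.lS r)),
    (MGSM bar m k).Run ⟨.lS r, o1⟩ r r ⟨.lD, trivial⟩ := by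
  intro r
  induction r with
  | nil => intro hne o1; exact absurd rfl hne
  | cons a s ih =>
      intro hne o1
      by_cases hs : s = []
      · subst hs
        have step1 : ((⟨.lD, trivial⟩ : (MGSM bar m k).Q), [a]) ∈
            (MGSM bar m k).step ⟨.lS [a], o1⟩ a := Or.inl ⟨rfl, rfl, rfl⟩
        exact run_cast (run_single step1) rfl rfl rfl rfl
      · have os : s.length ≤ m + k := by
          have := o1
          simp [okQ] at this ⊢
          omega
        have step1 : ((⟨.lS (s ++ []), by simpa [okQ] using os⟩ : (MGSM bar m k).Q), [a]) ∈
            (MGSM bar m k).step ⟨.lS (a :: s), o1⟩ a :=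
          Or.inr ⟨s, rfl, by simpa using hs, rfl⟩
        refine run_cast
          (GSM.Run.cons step1
            (run_cast (ih hs (by simpa [okQ] using os)) (Subtype.ext (by simp)) rfl rfl rfl))
          rfl rfl (by simp) rfl

lemma run_lB_match (bar : V → V) (m k : ℕ) (g q0 : List V) (hq0 : q0 ≠ [])
    (o1 : okQ m k (.lB g q0)) :
    (MGSM bar m k).Run ⟨.lB g q0, o1⟩ (q0 ++ g) (q0 ++ g) ⟨.lD, trivial⟩ := by
  obtain ⟨og, oq⟩ := o1
  cases q0 with
  | nil => exact absurd rfl hq0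
  | cons x s =>
      by_cases hsg : s ++ g = []
      · obtain ⟨rfl, rfl⟩ := List.append_eq_nil_iff.mp hsg
        have step1 : ((⟨.lD, trivial⟩ : (MGSM bar m k).Q), [x]) ∈
            (MGSM bar m k).step ⟨.lB [] [x], ⟨og, oq⟩⟩ x := Or.inr (Or.inl ⟨rfl, rfl, rfl⟩)
        exact run_cast (run_single step1) rfl (by simp) (by simp) rfl
      · have osg : (s ++ g).length ≤ m + k := by
          simp at og oq ⊢
          omega
        have step1 : ((⟨.lS (s ++ g), osg⟩ : (MGSM bar m k).Q), [x]) ∈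
            (MGSM bar m k).step ⟨.lB g (x :: s), ⟨og, oq⟩⟩ x :=
          Or.inr (Or.inr ⟨s, rfl, hsg, rfl⟩)
        refine run_cast (GSM.Run.cons step1 (run_matchLS bar m k (s ++ g) hsg osg))
          rfl (by simp) (by simp) rfl

lemma lift_st {bar : V → V} {m k : ℕ} {u v : List V} {q : (MGSM bar m k).Q}
    (h : (MGSM bar m k).Run ⟨.s0, trivial⟩ u v q) (hu : u ≠ []) :
    (MGSM bar m k).Run ⟨.st, trivial⟩ u v q := by
  revert hu
  refine GSM.Run.casesOn (motive := fun (q0 : (MGSM bar m k).Q) (u0 : List V) (v0 : List V) (qf0 : (MGSM bar m k).Q) _ =>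
      q0 = ⟨.s0, trivial⟩ → u0 ≠ [] →
    (MGSM bar m k).Run ⟨.st, trivial⟩ u0 v0 qf0) h ?_ ?_ rfl
  · intro q0 _ hu; exact absurd rfl hu
  · intro q0 q' qf a u0 out v0 hs hr hq _; subst hq; exact GSM.Run.cons (Or.inl hs) hr

lemma run_enter (bar : V → V) (m k : ℕ) (g α : List V) (hg : g.length ≤ m)
    (hα : α.length = k) (hk : 1 ≤ k) (hα0 : α ≠ []) (o2 : okQ m k (.rB g α)) :
    (MGSM bar m k).Run ⟨.s0, trivial⟩ (g ++ α) (g ++ α) ⟨.rB g α, o2⟩ := by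
  obtain ⟨x, α', rfl⟩ : ∃ x α', α = x :: α' := by
    cases α with
    | nil => exact absurd rfl hα0
    | cons x t => exact ⟨x, t, rfl⟩
  have hxl : ([x] : List V).length ≤ k := by simpa using hk
  cases g with
  | nil =>
      have step1 : ((⟨mkRA k [] [x], ok_mkRA (by simp) hxl⟩ : (MGSM bar m k).Q), [x]) ∈
          (MGSM bar m k).step ⟨.s0, trivial⟩ x := Or.inr (Or.inr ⟨hk, rfl⟩)
      have h2 := run_alp bar m k α' [x] [] (by simpa using hα) (by simp)
        (ok_mkRA (by simp) hxl) (by exact ⟨by simp, by simpa using le_of_eq hα⟩)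
      exact run_cast (GSM.Run.cons step1 h2) rfl (by simp) (by simp) (Subtype.ext (by simp))
  | cons gh gt =>
      have hgl : ((gh :: gt) : List V).length ≤ m := hg
      have hm1 : 1 ≤ m := by simp at hgl; omega
      have hg2 : (([gh] ++ gt) : List V).length ≤ m := by simpa using hg
      have step1 : ((⟨.rG [gh], by simpa [okQ] using hm1⟩ : (MGSM bar m k).Q), [gh]) ∈
          (MGSM bar m k).step ⟨.s0, trivial⟩ gh := Or.inr (Or.inl ⟨hm1, rfl⟩)
      have h2 := run_gam bar m k gt [gh] hg2 (by simpa [okQ] using hm1) (by simpa [okQ] using hg2)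
      have step2 : ((⟨mkRA k ([gh] ++ gt) [x], ok_mkRA (by simpa using hg2) hxl⟩ :
            (MGSM bar m k).Q), [x]) ∈
          (MGSM bar m k).step ⟨.rG ([gh] ++ gt), by simpa [okQ] using hg2⟩ x :=
        Or.inr ⟨hk, rfl⟩
      have h3 := run_alp bar m k α' [x] ([gh] ++ gt) (by simpa using hα) (by simpa using hg2)
        (ok_mkRA (by simpa using hg2) hxl)
        ⟨by simpa using hg2, by simpa using le_of_eq hα⟩
      have h4 := run_append h2 (GSM.Run.cons step2 h3)
      have h5 := GSM.Run.cons step1 h4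
      exact run_cast h5 rfl (by simp) (by simp) (Subtype.ext (by simp))

lemma run_right (bar : V → V) (m k : ℕ) (δ g α β : List V) (hα : α.length = k)
    (hg : g.length ≤ m) (hk : 1 ≤ k) :
    (MGSM bar m k).Run ⟨.st, trivial⟩ (δ ++ g ++ α ++ β ++ rc bar α)
      ((δ ++ g ++ α ++ β ++ rc bar α) ++ rc bar g) ⟨.qf, trivial⟩ := by
  have hα0 : α ≠ [] := by
    intro h; rw [h] at hα; simp at hα; omega
  have o2 : okQ m k (QS.rB g α) := ⟨hg, le_of_eq hα⟩
  have h1 := run_enter bar m k g α hg hα hk hα0 o2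
  have h2 := run_copy_rB bar m k g α o2 β
  have h3 := run_rB_match bar m k g α hα hk o2
  have h5 := run_append (run_copy_s0 bar m k δ) (run_append h1 (run_append h2 h3))
  have hne : δ ++ ((g ++ α) ++ (β ++ rc bar α)) ≠ [] := by
    intro hc
    have := congrArg List.length hc
    simp [hα] at this
    omega
  exact run_cast (lift_st h5 hne) rfl (by simp) (by simp) rfl

lemma run_left (bar : V → V) (m k : ℕ) (α β g δ : List V) (hα : α.length = k)
    (hg : g.length ≤ m) (hk : 1 ≤ k) :
    (MGSM bar m k).Run ⟨.st, trivial⟩ (α ++ β ++ rc bar α ++ g ++ δ)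
      (rc bar g ++ (α ++ β ++ rc bar α ++ g ++ δ)) ⟨.lD, trivial⟩ := by
  obtain ⟨x, α', rfl⟩ : ∃ x α', α = x :: α' := by
    cases α with
    | nil => simp at hα; omega
    | cons x t => exact ⟨x, t, rfl⟩
  have hxl : ([x] : List V).length ≤ k := by simp at hα ⊢; omega
  have olB : okQ m k (QS.lB g (rc bar ([x] ++ α'))) :=
    ⟨hg, by simpa using le_of_eq hα⟩
  have step1 : ((⟨mkA bar k g [x], ok_mkA hg hxl⟩ : (MGSM bar m k).Q), rc bar g ++ [x]) ∈
      (MGSM bar m k).step ⟨.st, trivial⟩ x := Or.inr ⟨g, hg, hk, rfl⟩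
  have h2 := run_alpL bar m k α' [x] g (by simpa using hα) hg (ok_mkA hg hxl) olB
  have h3 := run_copy_lB bar m k g (rc bar ([x] ++ α')) olB β
  have hrcne : rc bar ([x] ++ α') ≠ [] := by
    intro hc
    have := congrArg List.length hc
    simp at this
  have h4 := run_lB_match bar m k g (rc bar ([x] ++ α')) hrcne olB
  have h5 := run_copyD bar m k δ
  have h6 := GSM.Run.cons step1 (run_append h2 (run_append h3 (run_append h4 h5)))
  exact run_cast h6 rfl (by simp) (by simp) rfl

lemma run_id (bar : V → V) (m k : ℕ) (w : List V) :
    ∃ fq ∈ (MGSM bar m k).accept, (MGSM bar m k).Run ⟨.st, trivial⟩ w w fq := by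
  cases w with
  | nil => exact ⟨⟨.st, trivial⟩, Or.inl rfl, GSM.Run.nil _⟩
  | cons a u =>
      refine ⟨⟨.s0, trivial⟩, Or.inr (Or.inl rfl), ?_⟩
      have step1 : ((⟨.s0, trivial⟩ : (MGSM bar m k).Q), [a]) ∈
          (MGSM bar m k).step ⟨.st, trivial⟩ a := Or.inl (Or.inl rfl)
      exact run_cast (GSM.Run.cons step1 (run_copy_s0 bar m k u)) rfl rfl (by simp) rfl

end Runs

theorem gsm_closed_HIL (bar : V → V) (hbar : ∀ a, bar (bar a) = a) (m k : ℕ) (hm : 1 ≤ m) (hk : 1 ≤ k)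
    (𝓛 : Set (Set (List V)))
    (hgsm : ∀ (M : GSM V V), ∀ L ∈ 𝓛, M.map L ∈ 𝓛) :
    ∀ L ∈ 𝓛, HIL bar m k L ∈ 𝓛 := by
  intro L hL
  have key : HIL bar m k L = (MGSM bar m k).map L := by
    ext v
    simp only [HIL, Set.mem_iUnion]
    constructor
    · rintro ⟨w, hw, hv⟩
      rcases hv with hr | hl
      · by_cases hd : hasRightDecomp bar m k w
        · rw [rHI, if_pos hd] at hr
          obtain ⟨δ, γ, α, β, hw', hαk, hγ, rfl⟩ := hr
          refine ⟨w, hw, ⟨.qf, trivial⟩, Or.inr (Or.inr (Or.inr rfl)), ?_⟩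
          rw [hw']
          exact run_right bar m k δ γ α β hαk hγ hk
        · rw [rHI, if_neg hd] at hr
          rw [Set.mem_singleton_iff] at hr
          obtain ⟨fq, hacc, hrun⟩ := run_id bar m k w
          refine ⟨w, hw, fq, hacc, ?_⟩
          rw [hr]
          exact hrun
      · by_cases hd : hasLeftDecomp bar m k w
        · rw [lHI, if_pos hd] at hl
          obtain ⟨α, β, γ, δ, hw', hαk, hγ, rfl⟩ := hl
          refine ⟨w, hw, ⟨.lD, trivial⟩, Or.inr (Or.inr (Or.inl rfl)), ?_⟩
          rw [hw']
          exact run_left bar m k α β γ δ hαk hγ hk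
        · rw [lHI, if_neg hd] at hl
          rw [Set.mem_singleton_iff] at hl
          obtain ⟨fq, hacc, hrun⟩ := run_id bar m k w
          refine ⟨w, hw, fq, hacc, ?_⟩
          rw [hl]
          exact hrun
    · rintro ⟨w, hw, fq, hacc, hrun⟩
      exact ⟨w, hw, Spec_st_HI (run_sound hrun hacc)⟩
  rw [key]
  exact hgsm _ L hL

end Hairpin
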